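/- Let p_ρ, p_θ, e_θ, ρ°, θ°, c° be real constants with ρ°, θ°, p_ρ, e_θ > 0 and c° = sqrt(p_ρ + θ°·p_θ²/((ρ°)²·e_θ)). For a function φ_ν on the torus satisfying -Δφ_ν = ν²φ_ν with ν > 0, the vector field U± = (±i ρ° φ_ν, (c°/ν)∇φ_ν, ±i (θ° p_θ/(ρ° e_θ)) φ_ν) satisfies 𝒜 U± = ±i c° ν U±, where 𝒜(ρ̃, ũ, θ̃) = (ρ°∇·ũ, (p_ρ/ρ°)∇ρ̃ + (p_θ/ρ°)∇θ̃, (θ° p_θ/(ρ° e_θ))∇·ũ). -/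

import Mathlib

open Complex

/-- Partial derivative `∂_j f` of a complex-valued function on `ℝ^N`. -/
noncomputable def pd {N : ℕ} (f : EuclideanSpace ℝ (Fin N) → ℂ) (j : Fin N)
    (x : EuclideanSpace ℝ (Fin N)) : ℂ :=
  fderiv ℝ f x (EuclideanSpace.single j 1)

/-- Partial derivative `∂_j f` of a real-valued function on `ℝ^N`. -/
noncomputable def pdR {N : ℕ} (f : EuclideanSpace ℝ (Fin N) → ℝ) (j : Fin N)
    (x : EuclideanSpace ℝ (Fin N)) : ℝ :=
  fderiv ℝ f x (EuclideanSpace.single j 1)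

lemma pd_const_mul_ofReal {N : ℕ} (f : EuclideanSpace ℝ (Fin N) → ℝ) (a : ℂ) (j : Fin N)
    (x : EuclideanSpace ℝ (Fin N)) (hf : DifferentiableAt ℝ f x) :
    pd (fun y => a * ((f y : ℝ) : ℂ)) j x = a * (pdR f j x : ℂ) := by
  have hfc : fderiv ℝ (fun y => ((f y : ℝ) : ℂ)) x =
      Complex.ofRealCLM.comp (fderiv ℝ f x) :=
    (Complex.ofRealCLM.hasFDerivAt.comp x hf.hasFDerivAt).fderiv
  have hfd : DifferentiableAt ℝ (fun y => ((f y : ℝ) : ℂ)) x :=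
    Complex.ofRealCLM.differentiableAt.comp x hf
  unfold pd pdR
  rw [fderiv_const_mul hfd a]
  simp [hfc]

lemma pdR_fst_diff {N : ℕ} (f : EuclideanSpace ℝ (Fin N) → ℝ) (hf : ContDiff ℝ 2 f)
    (j : Fin N) : Differentiable ℝ (pdR f j) := by
  have h1 : ContDiff ℝ 1 (fderiv ℝ f) := hf.fderiv_right (by norm_num)
  exact (((ContinuousLinearMap.apply ℝ ℝ
    (EuclideanSpace.single j (1 : ℝ))).contDiff).comp h1).differentiable (by norm_num)

/-- If `-Δφ = ν²φ` with `ν > 0`, then the field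
`U± = (± i ρ° φ, (c°/ν) ∇φ, ± i (θ° p_θ/(ρ° e_θ)) φ)` is an eigenvector of the
acoustic operator `𝒜(ρ̃, ũ, θ̃) = (ρ° ∇·ũ, (p_ρ/ρ°)∇ρ̃ + (p_θ/ρ°)∇θ̃,
(θ° p_θ/(ρ° e_θ)) ∇·ũ)` with eigenvalue `± i c° ν`, where
`c° = √(p_ρ + θ° p_θ²/((ρ°)² e_θ))` is the sound speed. -/
theorem stmt_14 (N : ℕ) (pρ pθ eθ ρ θ c ν : ℝ)
    (hρ : 0 < ρ) (hθ : 0 < θ) (hpρ : 0 < pρ) (heθ : 0 < eθ) (hν : 0 < ν)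
    (hc : c = Real.sqrt (pρ + θ * pθ ^ 2 / (ρ ^ 2 * eθ)))
    (ε : ℝ) (hε : ε = 1 ∨ ε = -1)
    (φ : EuclideanSpace ℝ (Fin N) → ℝ) (hφ : ContDiff ℝ 2 φ)
    (hlap : ∀ x, (∑ j, pdR (pdR φ j) j x) = -(ν ^ 2) * φ x)
    (ρt θt : EuclideanSpace ℝ (Fin N) → ℂ)
    (u : Fin N → EuclideanSpace ℝ (Fin N) → ℂ)
    (hρt : ∀ x, ρt x = (ε : ℂ) * I * (ρ : ℂ) * (φ x : ℂ))
    (hθt : ∀ x, θt x = (ε : ℂ) * I * ((θ * pθ / (ρ * eθ) : ℝ) : ℂ) * (φ x : ℂ))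
    (hu : ∀ j x, u j x = ((c / ν : ℝ) : ℂ) * (pdR φ j x : ℂ)) :
    (∀ x, (ρ : ℂ) * ∑ j, pd (u j) j x = ((ε : ℂ) * I * (c : ℂ) * (ν : ℂ)) * ρt x) ∧
    (∀ j x, ((pρ / ρ : ℝ) : ℂ) * pd ρt j x + ((pθ / ρ : ℝ) : ℂ) * pd θt j x
      = ((ε : ℂ) * I * (c : ℂ) * (ν : ℂ)) * u j x) ∧
    (∀ x, ((θ * pθ / (ρ * eθ) : ℝ) : ℂ) * ∑ j, pd (u j) j x
      = ((ε : ℂ) * I * (c : ℂ) * (ν : ℂ)) * θt x) := by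
  have hφd : Differentiable ℝ φ := hφ.differentiable (by norm_num)
  have hε2 : (ε : ℂ) * I * ((ε : ℂ) * I) = -1 := by
    rcases hε with h | h <;> rw [h] <;> push_cast <;> ring_nf <;> simp [Complex.I_sq]
  have hc2 : (c : ℂ) ^ 2 * ((ρ : ℂ) ^ 2 * (eθ : ℂ))
      = (pρ : ℂ) * ((ρ : ℂ) ^ 2 * (eθ : ℂ)) + (θ : ℂ) * (pθ : ℂ) ^ 2 := by
    have h : c ^ 2 = pρ + θ * pθ ^ 2 / (ρ ^ 2 * eθ) := by
      rw [hc, Real.sq_sqrt]; positivity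
    have h2 : c ^ 2 * (ρ ^ 2 * eθ) = pρ * (ρ ^ 2 * eθ) + θ * pθ ^ 2 := by
      rw [h]; field_simp
    exact_mod_cast h2
  have hν0 : (ν : ℂ) ≠ 0 := by exact_mod_cast hν.ne'
  have hρ0 : (ρ : ℂ) ≠ 0 := by exact_mod_cast hρ.ne'
  have heθ0 : (eθ : ℂ) ≠ 0 := by exact_mod_cast heθ.ne'
  -- divergence of u
  have hdiv : ∀ x, (∑ j, pd (u j) j x) =
      ((c / ν : ℝ) : ℂ) * (-(ν ^ 2 : ℂ)) * (φ x : ℂ) := by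
    intro x
    have : ∀ j : Fin N, pd (u j) j x = ((c / ν : ℝ) : ℂ) * (pdR (pdR φ j) j x : ℂ) := by
      intro j
      have : u j = fun y => ((c / ν : ℝ) : ℂ) * ((pdR φ j y : ℝ) : ℂ) := funext (hu j)
      rw [this, pd_const_mul_ofReal _ _ _ _ ((pdR_fst_diff φ hφ j) x)]
    rw [Finset.sum_congr rfl fun j _ => this j, ← Finset.mul_sum]
    have hl : ((∑ j, pdR (pdR φ j) j x : ℝ) : ℂ) = ((-(ν ^ 2) * φ x : ℝ) : ℂ) := by
      rw [hlap x]
    push_cast at hl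
    push_cast [hl]
    ring
  refine ⟨?_, ?_, ?_⟩
  · intro x
    rw [hdiv x, hρt x]
    push_cast
    field_simp
    linear_combination (-((c : ℂ) * (φ x : ℂ))) * hε2
  · intro j x
    have h1 : pd ρt j x = (ε : ℂ) * I * (ρ : ℂ) * (pdR φ j x : ℂ) := by
      have : ρt = fun y => ((ε : ℂ) * I * (ρ : ℂ)) * ((φ y : ℝ) : ℂ) := by
        funext y; rw [hρt y]
      rw [this, pd_const_mul_ofReal _ _ _ _ (hφd x)]
    have h2 : pd θt j x = (ε : ℂ) * I * ((θ * pθ / (ρ * eθ) : ℝ) : ℂ) * (pdR φ j x : ℂ) := by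
      have : θt = fun y => ((ε : ℂ) * I * ((θ * pθ / (ρ * eθ) : ℝ) : ℂ)) * ((φ y : ℝ) : ℂ) := by
        funext y; rw [hθt y]
      rw [this, pd_const_mul_ofReal _ _ _ _ (hφd x)]
    rw [h1, h2, hu j x]
    push_cast
    field_simp
    linear_combination (-((ε : ℂ) * (pdR φ j x : ℂ))) * hc2
  · intro x
    rw [hdiv x, hθt x]
    push_cast
    field_simp
    linear_combination (-((θ : ℂ) * (pθ : ℂ) * (c : ℂ) * (φ x : ℂ))) * hε2
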